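/- Let S, T be compatible digraphs such that every directed cut of G = S ∪ T has at least two edges in E(S), S⁻ is a tree, and there is an outset X of T with D_S(X) = {s} where s ∈ D⁻_S(X). Let G₁ = G/s (contract s), and let S₁ be the digraph of remaining S-edges. If A, B partition E(S₁) into two dijoins of G₁, then A and B are also dijoins of G. -/
import Mathlib


/-- Edges leaving `X` (tail in `X`, head outside `X`). -/
def dicut {V E : Type} (tl hd : E → V) (X : Set V) : Set E :=
  {e | tl e ∈ X ∧ hd e ∉ X}

/-- `X` is an outset: nonempty, proper, and no edge enters `X`. -/
def IsOutset {V E : Type} (tl hd : E → V) (X : Set V) : Prop :=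
  X ≠ ∅ ∧ X ≠ Set.univ ∧ ∀ e, hd e ∈ X → tl e ∈ X

/-- A dijoin meets every directed cut. -/
def IsDijoin {V E : Type} (tl hd : E → V) (D : Set E) : Prop :=
  ∀ X : Set V, IsOutset tl hd X → (D ∩ dicut tl hd X).Nonempty

/-- The underlying undirected adjacency of a digraph with edges `E`. -/
def adjOf {V E : Type} (tl hd : E → V) (a b : V) : Prop :=
  ∃ e : E, (tl e = a ∧ hd e = b) ∨ (tl e = b ∧ hd e = a)

/-- The underlying (multi)graph is connected. -/
def UConnected {V E : Type} (tl hd : E → V) : Prop :=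
  ∀ a b : V, Relation.ReflTransGen (adjOf tl hd) a b

/-- `S, T` compatible digraphs (`S`-edges `ES`, `T`-edges `ET`,
`G = S ∪ T` with edge type `ES ⊕ ET`), every directed cut of `G` has at least
two `S`-edges, `S⁻` is a tree, and `X` is an outset of `T` whose only crossing
`S`-edge is `s`, which enters `X`.  If `A, B` partition `E(S) \ {s}` into two
dijoins of `G₁ = G/s` (cuts of `G₁` = cuts of `G` at sets not separating the
ends of `s`), then `A` and `B` are dijoins of `G` itself. -/
lemma stmt19_aux {V ES ET : Type}
    (tS hS : ES → V) (tT hT : ET → V)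
    (hcut2 : ∀ X : Set V, IsOutset (Sum.elim tS tT) (Sum.elim hS hT) X →
      ∃ e f : ES, e ≠ f ∧
        (Sum.inl e : ES ⊕ ET) ∈ dicut (Sum.elim tS tT) (Sum.elim hS hT) X ∧
        (Sum.inl f : ES ⊕ ET) ∈ dicut (Sum.elim tS tT) (Sum.elim hS hT) X)
    (X : Set V) (hX : IsOutset tT hT X) (s : ES)
    (hs : hS s ∈ X ∧ tS s ∉ X)
    (honly : ∀ e : ES, e ≠ s → (tS e ∈ X ↔ hS e ∈ X))
    (A : Set ES)
    (hA : ∀ Y : Set V, Y ≠ ∅ → Y ≠ Set.univ → (tS s ∈ Y ↔ hS s ∈ Y) →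
      (∀ e : ES ⊕ ET, Sum.elim hS hT e ∈ Y → Sum.elim tS tT e ∈ Y) →
      ∃ e ∈ A, tS e ∈ Y ∧ hS e ∉ Y) :
    IsDijoin (Sum.elim tS tT) (Sum.elim hS hT) (Sum.inl '' A) := by
  intro Y hY
  obtain ⟨hYne, hYuniv, hYout⟩ := hY
  by_contra hmiss
  rw [Set.not_nonempty_iff_eq_empty] at hmiss
  -- A misses dicut Y, as a usable statement:
  have miss : ∀ e ∈ A, ¬ (tS e ∈ Y ∧ hS e ∉ Y) := by
    intro e he hc
    have : (Sum.inl e : ES ⊕ ET) ∈ (Sum.inl '' A : Set (ES ⊕ ET)) ∩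
        dicut (Sum.elim tS tT) (Sum.elim hS hT) Y :=
      ⟨⟨e, he, rfl⟩, hc⟩
    rw [hmiss] at this; exact this
  -- s must cross Y
  have hsY : tS s ∈ Y ∧ hS s ∉ Y := by
    by_contra hns
    have hiff : tS s ∈ Y ↔ hS s ∈ Y := by
      constructor
      · intro h; by_contra h'; exact hns ⟨h, h'⟩
      · intro h; exact hYout (Sum.inl s) h
    obtain ⟨e, heA, hcr⟩ := hA Y hYne hYuniv hiff hYout
    exact miss e heA hcr
  -- Y ∩ X = ∅
  have hYX : Y ∩ X = ∅ := by
    by_contra hne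
    have hiff : tS s ∈ Y ∩ X ↔ hS s ∈ Y ∩ X := by
      constructor
      · intro h; exact absurd h.2 hs.2
      · intro h; exact absurd h.1 hsY.2
    have hclos : ∀ e : ES ⊕ ET, Sum.elim hS hT e ∈ Y ∩ X →
        Sum.elim tS tT e ∈ Y ∩ X := by
      intro e he
      refine ⟨hYout e he.1, ?_⟩
      cases e with
      | inl eS =>
        by_cases hes : eS = s
        · subst hes; exact absurd he.1 hsY.2
        · exact (honly eS hes).mpr he.2
      | inr eT => exact hX.2.2 eT he.2
    have huniv : Y ∩ X ≠ Set.univ := by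
      intro h
      have : hS s ∈ Y ∩ X := by rw [h]; trivial
      exact hsY.2 this.1
    obtain ⟨e, heA, hcr⟩ := hA (Y ∩ X) hne huniv hiff hclos
    have hes : e ≠ s := fun h => hs.2 (h ▸ hcr.1.2)
    have : hS e ∉ Y := fun hy => hcr.2 ⟨hy, (honly e hes).mp hcr.1.2⟩
    exact miss e heA ⟨hcr.1.1, this⟩
  -- Y ∪ X = univ
  have hYuX : Y ∪ X = Set.univ := by
    by_contra hne
    have hne' : Y ∪ X ≠ ∅ := by
      intro h
      have : tS s ∈ Y ∪ X := Or.inl hsY.1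
      rw [h] at this; exact this
    have hiff : tS s ∈ Y ∪ X ↔ hS s ∈ Y ∪ X :=
      ⟨fun _ => Or.inr hs.1, fun _ => Or.inl hsY.1⟩
    have hclos : ∀ e : ES ⊕ ET, Sum.elim hS hT e ∈ Y ∪ X →
        Sum.elim tS tT e ∈ Y ∪ X := by
      intro e he
      rcases he with h | h
      · exact Or.inl (hYout e h)
      · cases e with
        | inl eS =>
          by_cases hes : eS = s
          · subst hes; exact Or.inl hsY.1
          · exact Or.inr ((honly eS hes).mpr h)
        | inr eT => exact Or.inr (hX.2.2 eT h)
    obtain ⟨e, heA, hcr⟩ := hA (Y ∪ X) hne' hne hiff hclos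
    have hes : e ≠ s := fun h => hcr.2 (Or.inr (h ▸ hs.1))
    have htY : tS e ∈ Y := by
      rcases hcr.1 with h | h
      · exact h
      · exact absurd (Or.inr ((honly e hes).mp h)) hcr.2
    exact miss e heA ⟨htY, fun hy => hcr.2 (Or.inl hy)⟩
  -- hence Y = Xᶜ, so dicut Y has only s as S-edge; contradict hcut2
  obtain ⟨e, f, hef, he, hf⟩ := hcut2 Y ⟨hYne, hYuniv, hYout⟩
  have key : ∀ g : ES, (Sum.inl g : ES ⊕ ET) ∈
      dicut (Sum.elim tS tT) (Sum.elim hS hT) Y → g = s := by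
    intro g hg
    by_contra hgs
    have h1 : tS g ∉ X := fun hx => by
      have : tS g ∈ Y ∩ X := ⟨hg.1, hx⟩
      rw [hYX] at this; exact this
    have h2 : hS g ∈ X := by
      have : hS g ∈ Y ∪ X := by rw [hYuX]; trivial
      rcases this with h | h
      · exact absurd h hg.2
      · exact h
    exact h1 ((honly g hgs).mpr h2)
  exact hef ((key e he).trans (key f hf).symm)

theorem stmt19 {V ES ET : Type} [Fintype V] [Fintype ES] [Fintype ET]
    (tS hS : ES → V) (tT hT : ET → V)
    -- S⁻ is a tree:
    (hconn : UConnected tS hS)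
    (hcard : Fintype.card ES + 1 = Fintype.card V)
    -- every directed cut of G has at least two S-edges:
    (hcut2 : ∀ X : Set V, IsOutset (Sum.elim tS tT) (Sum.elim hS hT) X →
      ∃ e f : ES, e ≠ f ∧
        (Sum.inl e : ES ⊕ ET) ∈ dicut (Sum.elim tS tT) (Sum.elim hS hT) X ∧
        (Sum.inl f : ES ⊕ ET) ∈ dicut (Sum.elim tS tT) (Sum.elim hS hT) X)
    -- X is an outset of T with D_S(X) = {s} and s ∈ D⁻_S(X):
    (X : Set V) (hX : IsOutset tT hT X) (s : ES)
    (hs : hS s ∈ X ∧ tS s ∉ X)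
    (honly : ∀ e : ES, e ≠ s → (tS e ∈ X ↔ hS e ∈ X))
    -- A, B partition E(S) \ {s} into two dijoins of G/s:
    (A B : Set ES)
    (hU : A ∪ B = {e : ES | e ≠ s}) (hI : A ∩ B = ∅)
    (hA : ∀ Y : Set V, Y ≠ ∅ → Y ≠ Set.univ → (tS s ∈ Y ↔ hS s ∈ Y) →
      (∀ e : ES ⊕ ET, Sum.elim hS hT e ∈ Y → Sum.elim tS tT e ∈ Y) →
      ∃ e ∈ A, tS e ∈ Y ∧ hS e ∉ Y)
    (hB : ∀ Y : Set V, Y ≠ ∅ → Y ≠ Set.univ → (tS s ∈ Y ↔ hS s ∈ Y) →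
      (∀ e : ES ⊕ ET, Sum.elim hS hT e ∈ Y → Sum.elim tS tT e ∈ Y) →
      ∃ e ∈ B, tS e ∈ Y ∧ hS e ∉ Y) :
    IsDijoin (Sum.elim tS tT) (Sum.elim hS hT) (Sum.inl '' A) ∧
    IsDijoin (Sum.elim tS tT) (Sum.elim hS hT) (Sum.inl '' B) :=
  ⟨stmt19_aux tS hS tT hT hcut2 X hX s hs honly A hA,
   stmt19_aux tS hS tT hT hcut2 X hX s hs honly B hB⟩
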